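/- Let (Ω, F) be a measurable space, let k be a positive integer, let p₁, …, p_k and p′₁, …, p′_k be probability measures on Ω, and let α = (α₁, …, α_k) and α′ = (α′₁, …, α′_k) be probability vectors (αᵢ ≥ 0, Σᵢ αᵢ = 1, and likewise for α′) with α′ᵢ > 0 whenever αᵢ > 0. Then the Kullback–Leibler divergence between the mixture measures satisfies KL(Σᵢ₌₁ᵏ αᵢ pᵢ ‖ Σᵢ₌₁ᵏ α′ᵢ p′ᵢ) ≤ KL(α ‖ α′) + Σᵢ₌₁ᵏ αᵢ · KL(pᵢ ‖ p′ᵢ), where KL(α ‖ α′) = Σᵢ αᵢ log(αᵢ/α′ᵢ) is the Kullback–Leibler divergence between the two probability vectors. -/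

import Mathlib

open MeasureTheory
open scoped Classical

/-- Kullback–Leibler divergence: `∫ log (dμ/dν) dμ` when `μ ≪ ν` (and the
log-likelihood ratio is integrable), and `+∞` otherwise. -/

noncomputable def klDiv {Ω : Type*} [MeasurableSpace Ω] (μ ν : Measure Ω) : EReal :=
  if μ ≪ ν ∧ Integrable (llr μ ν) μ then ((∫ x, llr μ ν x ∂μ : ℝ) : EReal) else ⊤

private lemma aux_sum_ne_bot {ι : Type*} (s : Finset ι) (f : ι → EReal)
    (h : ∀ i ∈ s, f i ≠ ⊥) : ∑ i ∈ s, f i ≠ ⊥ := by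
  classical
  induction s using Finset.induction_on with
  | empty => simp
  | @insert a s ha ih =>
    rw [Finset.sum_insert ha, ne_eq, EReal.add_eq_bot_iff]
    push_neg
    exact ⟨h a (Finset.mem_insert_self a s), ih fun i hi => h i (Finset.mem_insert_of_mem hi)⟩

private lemma aux_sum_eq_top {ι : Type*} (s : Finset ι) (f : ι → EReal)
    (h : ∀ i ∈ s, f i ≠ ⊥) {i : ι} (his : i ∈ s) (hi : f i = ⊤) : ∑ j ∈ s, f j = ⊤ := by
  classical
  rw [← Finset.add_sum_erase s f his, hi]
  exact EReal.top_add_of_ne_bot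
    (aux_sum_ne_bot _ _ fun j hj => h j (Finset.mem_of_mem_erase hj))

private lemma aux_coe_sum {ι : Type*} (s : Finset ι) (f : ι → ℝ) :
    ((∑ i ∈ s, f i : ℝ) : EReal) = ∑ i ∈ s, (f i : EReal) := by
  classical
  induction s using Finset.induction_on with
  | empty => simp
  | @insert a s ha ih => rw [Finset.sum_insert ha, Finset.sum_insert ha, EReal.coe_add, ih]

/-- The KL divergence between two mixtures `∑ i, αᵢ pᵢ` and `∑ i, α′ᵢ p′ᵢ` is bounded by
`KL(α ‖ α′) + ∑ i, αᵢ · KL(pᵢ ‖ p′ᵢ)`. -/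
theorem klDiv_mixture_le
    {Ω : Type*} [MeasurableSpace Ω] (k : ℕ) (hk : 0 < k)
    (p p' : Fin k → Measure Ω)
    (hp : ∀ i, IsProbabilityMeasure (p i)) (hp' : ∀ i, IsProbabilityMeasure (p' i))
    (α α' : Fin k → ℝ)
    (hα : ∀ i, 0 ≤ α i) (hαs : ∑ i, α i = 1)
    (hα' : ∀ i, 0 ≤ α' i) (hα's : ∑ i, α' i = 1)
    (hpos : ∀ i, 0 < α i → 0 < α' i) :
    klDiv (∑ i, ENNReal.ofReal (α i) • p i) (∑ i, ENNReal.ofReal (α' i) • p' i) ≤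
      ((∑ i, α i * Real.log (α i / α' i) : ℝ) : EReal) +
        ∑ i, ((α i : ℝ) : EReal) * klDiv (p i) (p' i) := by
  set μ : Measure Ω := ∑ i, ENNReal.ofReal (α i) • p i with hμdef
  set ν : Measure Ω := ∑ i, ENNReal.ofReal (α' i) • p' i with hνdef
  by_cases H : ∀ i, 0 < α i → (p i ≪ p' i ∧ Integrable (llr (p i) (p' i)) (p i))
  swap
  · -- some component has infinite KL and positive weight : RHS = ⊤
    obtain ⟨i, hi0⟩ := not_forall.1 H
    rw [Classical.not_imp] at hi0
    obtain ⟨hi, hbad⟩ := hi0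
    have hne_bot : ∀ j ∈ Finset.univ, ((α j : ℝ) : EReal) * klDiv (p j) (p' j) ≠ ⊥ := by
      intro j _
      rcases (hα j).eq_or_lt with h0 | h0
      · rw [← h0]; simp
      · unfold klDiv
        split
        · rw [← EReal.coe_mul]; exact EReal.coe_ne_bot _
        · rw [EReal.mul_top_of_pos (by exact_mod_cast h0)]
          exact top_ne_bot
    have htop : (∑ j, ((α j : ℝ) : EReal) * klDiv (p j) (p' j)) = ⊤ := by
      refine aux_sum_eq_top _ _ hne_bot (Finset.mem_univ i) ?_
      have hkl : klDiv (p i) (p' i) = ⊤ := by unfold klDiv; rw [if_neg hbad]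
      rw [hkl]
      exact EReal.mul_top_of_pos (by exact_mod_cast hi)
    rw [htop, EReal.coe_add_top]
    exact le_top
  · have hpp' : ∀ i, 0 < α i → p i ≪ p' i := fun i hi => (H i hi).1
    have hllri : ∀ i, 0 < α i → Integrable (llr (p i) (p' i)) (p i) := fun i hi => (H i hi).2
    have hc_top : ∀ i, ENNReal.ofReal (α i) ≠ ⊤ := fun i => ENNReal.ofReal_ne_top
    have hcα : ∀ i, (ENNReal.ofReal (α i)).toReal = α i := fun i => ENNReal.toReal_ofReal (hα i)
    have hcα' : ∀ i, (ENNReal.ofReal (α' i)).toReal = α' i := fun i => ENNReal.toReal_ofReal (hα' i)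
    have hle : ∀ i, ENNReal.ofReal (α i) • p i ≤ μ := by
      intro i
      rw [Measure.le_iff']
      intro A
      rw [hμdef, Measure.finset_sum_apply]
      exact Finset.single_le_sum (f := fun j => (ENNReal.ofReal (α j) • p j) A)
        (fun j _ => zero_le) (Finset.mem_univ i)
    have hle' : ∀ i, ENNReal.ofReal (α' i) • p' i ≤ ν := by
      intro i
      rw [Measure.le_iff']
      intro A
      rw [hνdef, Measure.finset_sum_apply]
      exact Finset.single_le_sum (f := fun j => (ENNReal.ofReal (α' j) • p' j) A)
        (fun j _ => zero_le) (Finset.mem_univ i)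
    have happly : ∀ (β : Fin k → ℝ) (q : Fin k → Measure Ω) (hq : ∀ i, IsProbabilityMeasure (q i))
        (hβ : ∀ i, 0 ≤ β i) (hβs : ∑ i, β i = 1),
        (∑ i, ENNReal.ofReal (β i) • q i) Set.univ = 1 := by
      intro β q hq hβ hβs
      rw [Measure.finset_sum_apply]
      have : ∀ i ∈ Finset.univ, (ENNReal.ofReal (β i) • q i) Set.univ = ENNReal.ofReal (β i) := by
        intro i _
        rw [Measure.smul_apply, (hq i).measure_univ, smul_eq_mul, mul_one]
      rw [Finset.sum_congr rfl this, ← ENNReal.ofReal_sum_of_nonneg (fun i _ => hβ i), hβs,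
        ENNReal.ofReal_one]
    have hμuniv : μ Set.univ = 1 := happly α p hp hα hαs
    have hνuniv : ν Set.univ = 1 := happly α' p' hp' hα' hα's
    haveI : IsProbabilityMeasure μ := ⟨hμuniv⟩
    haveI : IsProbabilityMeasure ν := ⟨hνuniv⟩
    have hac : μ ≪ ν := by
      refine Measure.AbsolutelyContinuous.mk fun A hAm hA => ?_
      rw [hμdef, Measure.finset_sum_apply]
      refine Finset.sum_eq_zero fun i _ => ?_
      rcases (hα i).eq_or_lt with h0 | h0
      · rw [Measure.smul_apply, ← h0]; simp
      · have hν0 : (ENNReal.ofReal (α' i) • p' i) A = 0 :=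
          le_antisymm ((Measure.le_iff'.1 (hle' i) A).trans hA.le) zero_le
        have hc'0 : ENNReal.ofReal (α' i) ≠ 0 := by
          rw [ne_eq, ENNReal.ofReal_eq_zero, not_le]; exact hpos i h0
        rw [Measure.smul_apply, smul_eq_mul, mul_eq_zero] at hν0
        have hp'A : p' i A = 0 := hν0.resolve_left hc'0
        rw [Measure.smul_apply, hpp' i h0 hp'A, smul_zero]
    have hPμ : ∀ i, 0 < α i → p i ≪ μ := by
      intro i hi
      refine Measure.AbsolutelyContinuous.mk fun A hAm hA => ?_
      have h0 : (ENNReal.ofReal (α i) • p i) A = 0 :=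
        le_antisymm ((Measure.le_iff'.1 (hle i) A).trans hA.le) zero_le
      have hci : ENNReal.ofReal (α i) ≠ 0 := by
        rw [ne_eq, ENNReal.ofReal_eq_zero, not_le]; exact hi
      rw [Measure.smul_apply, smul_eq_mul, mul_eq_zero] at h0
      exact h0.resolve_left hci
    have hPν : ∀ i, 0 < α i → p i ≪ ν := fun i hi => (hPμ i hi).trans hac
    have hg_meas : Measurable (μ.rnDeriv ν) := Measure.measurable_rnDeriv μ ν
    have hgν1 : ∫⁻ x, μ.rnDeriv ν x ∂ν = 1 := by
      rw [Measure.lintegral_rnDeriv hac, hμuniv]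
    have hwd : ν.withDensity (μ.rnDeriv ν) = μ := Measure.withDensity_rnDeriv_eq μ ν hac
    have hmulinv : ∀ (a b : ENNReal), b * (a * b⁻¹) ≤ a := by
      intro a b
      rw [mul_comm a b⁻¹, ← mul_assoc]
      calc b * b⁻¹ * a ≤ 1 * a := mul_le_mul_left (ENNReal.mul_inv_le_one b) a
        _ = a := one_mul a
    -- F1 : change of measure bound
    have hF1 : ∀ i, 0 < α i →
        ∫⁻ x, μ.rnDeriv ν x * ((p i).rnDeriv (p' i) x)⁻¹ ∂(p i)
          ≤ ∫⁻ x, μ.rnDeriv ν x ∂(p' i) := by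
      intro i hi
      haveI := hp i; haveI := hp' i
      have hr_meas : Measurable ((p i).rnDeriv (p' i)) := Measure.measurable_rnDeriv _ _
      have hh_meas : Measurable (fun x => μ.rnDeriv ν x * ((p i).rnDeriv (p' i) x)⁻¹) :=
        hg_meas.mul hr_meas.inv
      have hchg : ∀ (h : Ω → ENNReal), Measurable h →
          ∫⁻ x, h x ∂(p i) = ∫⁻ x, (p i).rnDeriv (p' i) x * h x ∂(p' i) := by
        intro h hh
        conv_lhs => rw [← Measure.withDensity_rnDeriv_eq (p i) (p' i) (hpp' i hi)]
        rw [lintegral_withDensity_eq_lintegral_mul _ (Measure.measurable_rnDeriv _ _) hh]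
        simp only [Pi.mul_apply]
      rw [hchg _ hh_meas]
      exact lintegral_mono fun x => hmulinv _ _
    have hgp' : ∀ i, 0 < α' i →
        ∫⁻ x, μ.rnDeriv ν x ∂(p' i) ≤ (ENNReal.ofReal (α' i))⁻¹ := by
      intro i hi'
      rw [ENNReal.le_inv_iff_mul_le, mul_comm]
      calc ENNReal.ofReal (α' i) * ∫⁻ x, μ.rnDeriv ν x ∂(p' i)
          = ∫⁻ x, μ.rnDeriv ν x ∂(ENNReal.ofReal (α' i) • p' i) :=
            by rw [lintegral_smul_measure, smul_eq_mul]
        _ ≤ ∫⁻ x, μ.rnDeriv ν x ∂ν := lintegral_mono' (hle' i) le_rfl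
        _ = 1 := hgν1
    -- the per-component work
    have main : ∀ i, 0 < α i →
        Integrable (llr μ ν) (p i) ∧
        α i - α' i * (∫⁻ x, μ.rnDeriv ν x * ((p i).rnDeriv (p' i) x)⁻¹ ∂(p i)).toReal ≤
          α i * (Real.log (α i / α' i) + ∫ x, llr (p i) (p' i) x ∂(p i)
            - ∫ x, llr μ ν x ∂(p i)) := by
      intro i hi
      haveI := hp i; haveI := hp' i
      have hi' : 0 < α' i := hpos i hi
      have hci : ENNReal.ofReal (α i) ≠ 0 := by
        rw [ne_eq, ENNReal.ofReal_eq_zero, not_le]; exact hi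
      have hci' : ENNReal.ofReal (α' i) ≠ 0 := by
        rw [ne_eq, ENNReal.ofReal_eq_zero, not_le]; exact hi'
      have hiac : p i ≪ p' i := hpp' i hi
      have hr_meas : Measurable ((p i).rnDeriv (p' i)) := Measure.measurable_rnDeriv _ _
      have hh_meas : Measurable (fun x => μ.rnDeriv ν x * ((p i).rnDeriv (p' i) x)⁻¹) :=
        hg_meas.mul hr_meas.inv
      have hLfin : ∫⁻ x, μ.rnDeriv ν x * ((p i).rnDeriv (p' i) x)⁻¹ ∂(p i) ≠ ⊤ :=
        (lt_of_le_of_lt ((hF1 i hi).trans (hgp' i hi'))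
          (ENNReal.inv_lt_top.2 (pos_iff_ne_zero.2 hci'))).ne
      have hF3 : ∫⁻ x, (μ.rnDeriv ν x)⁻¹ ∂(p i) ≤ (ENNReal.ofReal (α i))⁻¹ := by
        rw [ENNReal.le_inv_iff_mul_le, mul_comm]
        calc ENNReal.ofReal (α i) * ∫⁻ x, (μ.rnDeriv ν x)⁻¹ ∂(p i)
            = ∫⁻ x, (μ.rnDeriv ν x)⁻¹ ∂(ENNReal.ofReal (α i) • p i) :=
              by rw [lintegral_smul_measure, smul_eq_mul]
          _ ≤ ∫⁻ x, (μ.rnDeriv ν x)⁻¹ ∂μ := lintegral_mono' (hle i) le_rfl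
          _ = ∫⁻ x, μ.rnDeriv ν x * (μ.rnDeriv ν x)⁻¹ ∂ν := by
              have hchgμ : ∀ (h : Ω → ENNReal), Measurable h →
                  ∫⁻ x, h x ∂μ = ∫⁻ x, μ.rnDeriv ν x * h x ∂ν := by
                intro h hh
                conv_lhs => rw [← hwd]
                rw [lintegral_withDensity_eq_lintegral_mul _ hg_meas hh]
                simp only [Pi.mul_apply]
              exact hchgμ _ hg_meas.inv
          _ ≤ ∫⁻ _, 1 ∂ν := lintegral_mono fun x => ENNReal.mul_inv_le_one _
          _ = 1 := by rw [lintegral_one, hνuniv]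
      have hF3fin : ∫⁻ x, (μ.rnDeriv ν x)⁻¹ ∂(p i) ≠ ⊤ :=
        (lt_of_le_of_lt hF3 (ENNReal.inv_lt_top.2 (pos_iff_ne_zero.2 hci))).ne
      have hT_int : Integrable
          (fun x => (μ.rnDeriv ν x * ((p i).rnDeriv (p' i) x)⁻¹).toReal) (p i) :=
        integrable_toReal_of_lintegral_ne_top hh_meas.aemeasurable hLfin
      have hGinv_int : Integrable (fun x => ((μ.rnDeriv ν x)⁻¹).toReal) (p i) :=
        integrable_toReal_of_lintegral_ne_top hg_meas.inv.aemeasurable hF3fin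
      have hae : ∀ᵐ x ∂(p i), 0 < μ.rnDeriv ν x ∧ μ.rnDeriv ν x < ⊤ ∧
          0 < (p i).rnDeriv (p' i) x ∧ (p i).rnDeriv (p' i) x < ⊤ := by
        filter_upwards [(hPμ i hi).ae_le (Measure.rnDeriv_pos hac),
          (hPν i hi).ae_le (Measure.rnDeriv_lt_top μ ν),
          Measure.rnDeriv_pos hiac,
          hiac.ae_le (Measure.rnDeriv_lt_top (p i) (p' i))] with x h1 h2 h3 h4
        exact ⟨h1, h2, h3, h4⟩
      have hdecomp : ∀ᵐ x ∂(p i),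
          llr μ ν x = Real.log (α i / α' i) + llr (p i) (p' i) x
            + Real.log ((α' i / α i) *
              (μ.rnDeriv ν x * ((p i).rnDeriv (p' i) x)⁻¹).toReal) ∧
          0 < (α' i / α i) * (μ.rnDeriv ν x * ((p i).rnDeriv (p' i) x)⁻¹).toReal := by
        filter_upwards [hae] with x hx
        obtain ⟨h1, h2, h3, h4⟩ := hx
        have hG : 0 < (μ.rnDeriv ν x).toReal := ENNReal.toReal_pos h1.ne' h2.ne
        have hR : 0 < ((p i).rnDeriv (p' i) x).toReal := ENNReal.toReal_pos h3.ne' h4.ne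
        have htR : (μ.rnDeriv ν x * ((p i).rnDeriv (p' i) x)⁻¹).toReal
            = (μ.rnDeriv ν x).toReal * (((p i).rnDeriv (p' i) x).toReal)⁻¹ := by
          rw [ENNReal.toReal_mul, ENNReal.toReal_inv]
        have ht : 0 < (α' i / α i) *
            ((μ.rnDeriv ν x).toReal * (((p i).rnDeriv (p' i) x).toReal)⁻¹) := by positivity
        refine ⟨?_, by rw [htR]; exact ht⟩
        simp only [llr]
        rw [htR]
        have hrat : 0 < α i / α' i := by positivity
        have hprod : (α i / α' i) * (((p i).rnDeriv (p' i) x).toReal *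
            ((α' i / α i) * ((μ.rnDeriv ν x).toReal * (((p i).rnDeriv (p' i) x).toReal)⁻¹)))
            = (μ.rnDeriv ν x).toReal := by
          field_simp
        conv_lhs => rw [← hprod]
        rw [Real.log_mul hrat.ne' (by positivity), Real.log_mul hR.ne' ht.ne']
        ring
      have hllrint : Integrable (llr μ ν) (p i) := by
        refine Integrable.mono'
          (g := fun x => |Real.log (α i / α' i)| + |llr (p i) (p' i) x|
            + (α' i / α i) * (μ.rnDeriv ν x * ((p i).rnDeriv (p' i) x)⁻¹).toReal
            + ((μ.rnDeriv ν x)⁻¹).toReal)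
          ?_ (stronglyMeasurable_llr _ _).aestronglyMeasurable ?_
        · exact (((integrable_const _).add (hllri i hi).abs).add
            (hT_int.const_mul _)).add hGinv_int
        · filter_upwards [hdecomp, hae] with x hx hxx
          obtain ⟨hxeq, hxpos⟩ := hx
          obtain ⟨h1, h2, h3, h4⟩ := hxx
          have hG : 0 < (μ.rnDeriv ν x).toReal := ENNReal.toReal_pos h1.ne' h2.ne
          have habs1 := le_abs_self (Real.log (α i / α' i))
          have habs2 := le_abs_self (llr (p i) (p' i) x)
          have habs1' := neg_abs_le (Real.log (α i / α' i))
          have habs2' := neg_abs_le (llr (p i) (p' i) x)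
          have hTnn : 0 ≤ (α' i / α i) *
              (μ.rnDeriv ν x * ((p i).rnDeriv (p' i) x)⁻¹).toReal := le_of_lt hxpos
          have hGinn : 0 ≤ ((μ.rnDeriv ν x)⁻¹).toReal := ENNReal.toReal_nonneg
          rw [Real.norm_eq_abs, abs_le]
          constructor
          · -- lower bound: -llr ≤ (g⁻¹).toReal suffices
            have hneg : -llr μ ν x ≤ ((μ.rnDeriv ν x)⁻¹).toReal := by
              have hlog := Real.log_le_sub_one_of_pos (inv_pos.2 hG)
              rw [Real.log_inv] at hlog
              have : ((μ.rnDeriv ν x)⁻¹).toReal = ((μ.rnDeriv ν x).toReal)⁻¹ :=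
                ENNReal.toReal_inv _
              simp only [llr]
              rw [this]
              have hinv : (0:ℝ) < ((μ.rnDeriv ν x).toReal)⁻¹ := inv_pos.2 hG
              linarith
            have habs0 : 0 ≤ |Real.log (α i / α' i)| := abs_nonneg _
            have habs0' : 0 ≤ |llr (p i) (p' i) x| := abs_nonneg _
            linarith
          · -- upper bound
            rw [hxeq]
            have hlog := Real.log_le_sub_one_of_pos hxpos
            linarith
      refine ⟨hllrint, ?_⟩
      -- integral inequality
      have hWint : Integrable
          (fun x => Real.log (α i / α' i) + llr (p i) (p' i) x - llr μ ν x) (p i) :=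
        ((integrable_const _).add (hllri i hi)).sub hllrint
      have hlow_int : Integrable (fun x => 1 - (α' i / α i) *
          (μ.rnDeriv ν x * ((p i).rnDeriv (p' i) x)⁻¹).toReal) (p i) :=
        (integrable_const _).sub (hT_int.const_mul _)
      have hmono : ∫ x, (1 - (α' i / α i) *
            (μ.rnDeriv ν x * ((p i).rnDeriv (p' i) x)⁻¹).toReal) ∂(p i)
          ≤ ∫ x, (Real.log (α i / α' i) + llr (p i) (p' i) x - llr μ ν x) ∂(p i) := by
        refine integral_mono_ae hlow_int hWint ?_
        filter_upwards [hdecomp] with x hx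
        obtain ⟨hxeq, hxpos⟩ := hx
        have hlog := Real.log_le_sub_one_of_pos hxpos
        rw [hxeq]
        linarith
      have hTae : ∀ᵐ x ∂(p i), μ.rnDeriv ν x * ((p i).rnDeriv (p' i) x)⁻¹ < ⊤ := by
        filter_upwards [hae] with x hx
        obtain ⟨h1, h2, h3, h4⟩ := hx
        exact ENNReal.mul_lt_top h2 (ENNReal.inv_lt_top.2 h3)
      have hTval : ∫ x, (μ.rnDeriv ν x * ((p i).rnDeriv (p' i) x)⁻¹).toReal ∂(p i)
          = (∫⁻ x, μ.rnDeriv ν x * ((p i).rnDeriv (p' i) x)⁻¹ ∂(p i)).toReal :=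
        integral_toReal hh_meas.aemeasurable hTae
      have hleft : ∫ x, (1 - (α' i / α i) *
            (μ.rnDeriv ν x * ((p i).rnDeriv (p' i) x)⁻¹).toReal) ∂(p i)
          = 1 - (α' i / α i) *
            (∫⁻ x, μ.rnDeriv ν x * ((p i).rnDeriv (p' i) x)⁻¹ ∂(p i)).toReal := by
        rw [integral_sub (integrable_const _) (hT_int.const_mul _), integral_const,
          integral_const_mul, hTval]
        simp [measure_univ]
      have hright : ∫ x, (Real.log (α i / α' i) + llr (p i) (p' i) x - llr μ ν x) ∂(p i)
          = Real.log (α i / α' i) + ∫ x, llr (p i) (p' i) x ∂(p i)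
            - ∫ x, llr μ ν x ∂(p i) := by
        have hWint2 : Integrable
            (fun x : Ω => Real.log (α i / α' i) + llr (p i) (p' i) x) (p i) :=
          (integrable_const _).add (hllri i hi)
        rw [integral_sub hWint2 hllrint,
          integral_add (integrable_const _) (hllri i hi), integral_const]
        simp [measure_univ]
      rw [hleft, hright] at hmono
      have halg : α i - α' i *
          (∫⁻ x, μ.rnDeriv ν x * ((p i).rnDeriv (p' i) x)⁻¹ ∂(p i)).toReal
          = α i * (1 - (α' i / α i) *
            (∫⁻ x, μ.rnDeriv ν x * ((p i).rnDeriv (p' i) x)⁻¹ ∂(p i)).toReal) := by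
        field_simp
      rw [halg]
      exact mul_le_mul_of_nonneg_left hmono (hα i)
    -- global integrability
    have hint_each : ∀ i ∈ (Finset.univ : Finset (Fin k)),
        Integrable (llr μ ν) (ENNReal.ofReal (α i) • p i) := by
      intro i _
      rcases (hα i).eq_or_lt with h0 | h0
      · rw [← h0]; simp only [ENNReal.ofReal_zero, zero_smul]
        exact integrable_zero_measure
      · exact ((main i h0).1).smul_measure (hc_top i)
    have hint : Integrable (llr μ ν) μ := by
      rw [hμdef, integrable_finset_sum_measure]
      exact hint_each
    have hkl : klDiv μ ν = ((∫ x, llr μ ν x ∂μ : ℝ) : EReal) := by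
      unfold klDiv; rw [if_pos ⟨hac, hint⟩]
    rw [hkl]
    have hRHS : (∑ i, ((α i : ℝ) : EReal) * klDiv (p i) (p' i))
        = ((∑ i, α i * (if 0 < α i then ∫ x, llr (p i) (p' i) x ∂(p i) else 0) : ℝ) : EReal) := by
      rw [aux_coe_sum]
      refine Finset.sum_congr rfl fun i _ => ?_
      rcases (hα i).eq_or_lt with h0 | h0
      · rw [← h0]; simp
      · have : klDiv (p i) (p' i) = ((∫ x, llr (p i) (p' i) x ∂(p i) : ℝ) : EReal) := by
          unfold klDiv; rw [if_pos ⟨hpp' i h0, hllri i h0⟩]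
        rw [if_pos h0, this, ← EReal.coe_mul]
    rw [hRHS, ← EReal.coe_add, EReal.coe_le_coe_iff]
    -- now a purely real inequality
    have hVdecomp : ∫ x, llr μ ν x ∂μ = ∑ i, α i * ∫ x, llr μ ν x ∂(p i) := by
      rw [hμdef, integral_finset_sum_measure hint_each]
      refine Finset.sum_congr rfl fun i _ => ?_
      rw [integral_smul_measure, hcα i, smul_eq_mul]
    have hsum_le : ∑ i, (if 0 < α i then ENNReal.ofReal (α' i) *
        ∫⁻ x, μ.rnDeriv ν x * ((p i).rnDeriv (p' i) x)⁻¹ ∂(p i) else 0) ≤ 1 := by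
      calc ∑ i, (if 0 < α i then ENNReal.ofReal (α' i) *
            ∫⁻ x, μ.rnDeriv ν x * ((p i).rnDeriv (p' i) x)⁻¹ ∂(p i) else 0)
          ≤ ∑ i, ∫⁻ x, μ.rnDeriv ν x
              ∂(if 0 < α i then ENNReal.ofReal (α' i) • p' i else 0) := by
            refine Finset.sum_le_sum fun i _ => ?_
            by_cases h0 : 0 < α i
            · rw [if_pos h0, if_pos h0, lintegral_smul_measure]
              exact mul_le_mul_right (hF1 i h0) _
            · rw [if_neg h0, if_neg h0]
              simp
        _ = ∫⁻ x, μ.rnDeriv ν x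
              ∂(∑ i, if 0 < α i then ENNReal.ofReal (α' i) • p' i else 0) :=
            (lintegral_finset_sum_measure _ _ _).symm
        _ ≤ ∫⁻ x, μ.rnDeriv ν x ∂ν := by
            refine lintegral_mono' ?_ le_rfl
            rw [hνdef, Measure.le_iff']
            intro A
            rw [Measure.finset_sum_apply, Measure.finset_sum_apply]
            refine Finset.sum_le_sum fun i _ => ?_
            by_cases h0 : 0 < α i
            · rw [if_pos h0]
            · rw [if_neg h0]
              simp
        _ = 1 := hgν1
    have hterm_fin : ∀ i ∈ Finset.univ, (if 0 < α i then ENNReal.ofReal (α' i) *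
        ∫⁻ x, μ.rnDeriv ν x * ((p i).rnDeriv (p' i) x)⁻¹ ∂(p i) else 0) ≠ ⊤ := by
      intro i hi
      have h1 := (Finset.single_le_sum (f := fun i => (if 0 < α i then ENNReal.ofReal (α' i) *
        ∫⁻ x, μ.rnDeriv ν x * ((p i).rnDeriv (p' i) x)⁻¹ ∂(p i) else 0))
        (fun j _ => zero_le) hi).trans hsum_le
      exact (lt_of_le_of_lt h1 ENNReal.one_lt_top).ne
    have hsum_real : ∑ i, (if 0 < α i then α' i *
        (∫⁻ x, μ.rnDeriv ν x * ((p i).rnDeriv (p' i) x)⁻¹ ∂(p i)).toReal else 0) ≤ 1 := by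
      have h1 : (∑ i, (if 0 < α i then ENNReal.ofReal (α' i) *
          ∫⁻ x, μ.rnDeriv ν x * ((p i).rnDeriv (p' i) x)⁻¹ ∂(p i) else 0)).toReal ≤ 1 := by
        have := ENNReal.toReal_mono (by simp) hsum_le
        simpa using this
      rw [ENNReal.toReal_sum hterm_fin] at h1
      have h2 : ∀ i ∈ Finset.univ, (if 0 < α i then ENNReal.ofReal (α' i) *
          ∫⁻ x, μ.rnDeriv ν x * ((p i).rnDeriv (p' i) x)⁻¹ ∂(p i) else 0).toReal
          = (if 0 < α i then α' i *
          (∫⁻ x, μ.rnDeriv ν x * ((p i).rnDeriv (p' i) x)⁻¹ ∂(p i)).toReal else 0) := by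
        intro i _
        by_cases h0 : 0 < α i
        · rw [if_pos h0, if_pos h0, ENNReal.toReal_mul, hcα' i]
        · rw [if_neg h0, if_neg h0, ENNReal.toReal_zero]
      rw [Finset.sum_congr rfl h2] at h1
      exact h1
    have hsum_alpha : ∑ i, (if 0 < α i then α i else 0) = 1 := by
      rw [Finset.sum_congr rfl (fun i _ => ?_), hαs]
      by_cases h0 : 0 < α i
      · rw [if_pos h0]
      · rw [if_neg h0, ((hα i).antisymm (not_lt.1 h0)).symm]
    have hstep : ∀ i ∈ Finset.univ,
        (if 0 < α i then α i else 0) - (if 0 < α i then α' i *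
          (∫⁻ x, μ.rnDeriv ν x * ((p i).rnDeriv (p' i) x)⁻¹ ∂(p i)).toReal else 0)
        ≤ α i * Real.log (α i / α' i)
          + α i * (if 0 < α i then ∫ x, llr (p i) (p' i) x ∂(p i) else 0)
          - α i * ∫ x, llr μ ν x ∂(p i) := by
      intro i _
      by_cases h0 : 0 < α i
      · rw [if_pos h0, if_pos h0, if_pos h0]
        have h2 := (main i h0).2
        have hring : α i * (Real.log (α i / α' i) + ∫ x, llr (p i) (p' i) x ∂(p i)
            - ∫ x, llr μ ν x ∂(p i))
            = α i * Real.log (α i / α' i) + α i * ∫ x, llr (p i) (p' i) x ∂(p i)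
              - α i * ∫ x, llr μ ν x ∂(p i) := by ring
        rw [hring] at h2
        exact h2
      · have hz : α i = 0 := (not_lt.1 h0).antisymm (hα i)
        rw [if_neg h0, if_neg h0, if_neg h0, hz]
        simp
    have hsumineq := Finset.sum_le_sum hstep
    rw [Finset.sum_sub_distrib, Finset.sum_sub_distrib, Finset.sum_add_distrib,
      hsum_alpha] at hsumineq
    rw [hVdecomp]
    linarith [hsum_real, hsumineq]
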